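/- Unisolvency of the rotated-Q1 immersed finite element with edge-mean (integral-value) degrees of freedom on a Type II interface element: for every β⁻, β⁺ > 0, every d, e ∈ (0,1), and every (v₁,v₂,v₃,v₄) ∈ ℝ⁴, there exists a unique pair of coefficient vectors (c⁻, c⁺) ∈ ℝ⁴ × ℝ⁴ such that the associated piecewise rotated-Q1 function φ satisfies the jump conditions (J1)–(J3) and its four edge-mean degrees of freedom equal v₁, v₂, v₃, v₄ respectively. -/

import Mathlib

open MeasureTheory Set

noncomputable section

/-- The rotated-Q1 polynomial `c₁ + c₂ x + c₃ y + c₄ (x² − y²)` with coefficient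
vector `c = (c 0, c 1, c 2, c 3)`. -/
def rq1 (c : Fin 4 → ℝ) (x y : ℝ) : ℝ :=
  c 0 + c 1 * x + c 2 * y + c 3 * (x ^ 2 - y ^ 2)

/-- The piecewise rotated-Q1 function on the reference Type II interface element:
`p⁻` where `x ≤ d + (e − d) y`, `p⁺` elsewhere. -/
def phiFn (d e : ℝ) (cm cp : Fin 4 → ℝ) (x y : ℝ) : ℝ :=
  if x ≤ d + (e - d) * y then rq1 cm x y else rq1 cp x y

/-- Jump condition (J1): continuity at the interface points `D = (d,0)` and `E = (e,1)`. -/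
def J1 (d e : ℝ) (cm cp : Fin 4 → ℝ) : Prop :=
  rq1 cm d 0 = rq1 cp d 0 ∧ rq1 cm e 1 = rq1 cp e 1

/-- Jump condition (J2): matching of the `x² − y²` coefficients. -/
def J2 (cm cp : Fin 4 → ℝ) : Prop := cm 3 = cp 3

/-- The flux defect `∫₀¹ (β⁺∇p⁺ − β⁻∇p⁻)((1−t)d + te, t) · (1, d − e) dt`. -/
def fluxDefect (βm βp d e : ℝ) (cm cp : Fin 4 → ℝ) : ℝ :=
  ∫ t in (0:ℝ)..1,
    ((βp * (cp 1 + 2 * cp 3 * ((1 - t) * d + t * e))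
        - βm * (cm 1 + 2 * cm 3 * ((1 - t) * d + t * e))) * 1
      + (βp * (cp 2 - 2 * cp 3 * t) - βm * (cm 2 - 2 * cm 3 * t)) * (d - e))

/-- Jump condition (J3): the integral over `DE` of the jump of the normal flux vanishes. -/
def J3 (βm βp d e : ℝ) (cm cp : Fin 4 → ℝ) : Prop :=
  fluxDefect βm βp d e cm cp = 0

/-- The four edge-mean (integral-value) degrees of freedom of `φ`:
bottom, right, top, left edges of `T = [0,1]²`. -/
def dofI (d e : ℝ) (cm cp : Fin 4 → ℝ) : Fin 4 → ℝ :=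
  ![(∫ x in (0:ℝ)..d, rq1 cm x 0) + ∫ x in d..(1:ℝ), rq1 cp x 0,
    ∫ y in (0:ℝ)..1, rq1 cp 1 y,
    (∫ x in (0:ℝ)..e, rq1 cm x 1) + ∫ x in e..(1:ℝ), rq1 cp x 1,
    ∫ y in (0:ℝ)..1, rq1 cm 0 y]

/-- The four midpoint-value degrees of freedom of `φ`:
values at the midpoints of the bottom, right, top, left edges of `T = [0,1]²`. -/
def dofP (d e : ℝ) (cm cp : Fin 4 → ℝ) : Fin 4 → ℝ :=
  ![phiFn d e cm cp (1/2) 0, phiFn d e cm cp 1 (1/2),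
    phiFn d e cm cp (1/2) 1, phiFn d e cm cp 0 (1/2)]

/-- The partial derivative `∂ₓᵃ∂ᵧᵇ` of the rotated-Q1 polynomial with coefficients `c`. -/
def rq1D (c : Fin 4 → ℝ) : ℕ → ℕ → ℝ → ℝ → ℝ
  | 0, 0, x, y => rq1 c x y
  | 1, 0, x, _ => c 1 + 2 * c 3 * x
  | 0, 1, _, y => c 2 - 2 * c 3 * y
  | 2, 0, _, _ => 2 * c 3
  | 1, 1, _, _ => 0
  | 0, 2, _, _ => -(2 * c 3)
  | _, _, _, _ => 0


private lemma int_poly (p q r a b : ℝ) :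
    (∫ x in a..b, (p + q * x + r * x ^ 2)) =
      p * (b - a) + q * (b ^ 2 - a ^ 2) / 2 + r * (b ^ 3 - a ^ 3) / 3 := by
  have h : ∀ x ∈ uIcc a b,
      HasDerivAt (fun y : ℝ => p * y + q * (y ^ 2 / 2) + r * (y ^ 3 / 3))
        (p + q * x + r * x ^ 2) x := by
    intro x _
    have h1 : HasDerivAt (fun y : ℝ => y) 1 x := hasDerivAt_id x
    have h2 : HasDerivAt (fun y : ℝ => y ^ 2) (2 * x) x := by
      simpa using hasDerivAt_pow 2 x
    have h3 : HasDerivAt (fun y : ℝ => y ^ 3) (3 * x ^ 2) x := by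
      simpa using hasDerivAt_pow 3 x
    have h4 := ((h1.const_mul p).add ((h2.div_const 2).const_mul q)).add
      ((h3.div_const 3).const_mul r)
    refine h4.congr_deriv ?_
    ring
  have hint : IntervalIntegrable (fun x : ℝ => p + q * x + r * x ^ 2)
      MeasureTheory.volume a b := by
    apply Continuous.intervalIntegrable
    continuity
  rw [intervalIntegral.integral_eq_sub_of_hasDerivAt h hint]
  ring

private lemma int_rq1_bottom (c : Fin 4 → ℝ) (a b : ℝ) :
    (∫ x in a..b, rq1 c x 0)
      = c 0 * (b - a) + c 1 * (b ^ 2 - a ^ 2) / 2 + c 3 * (b ^ 3 - a ^ 3) / 3 := by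
  rw [intervalIntegral.integral_congr (g := fun x => c 0 + c 1 * x + c 3 * x ^ 2)
      (fun x _ => by simp only [rq1]; ring), int_poly]

private lemma int_rq1_top (c : Fin 4 → ℝ) (a b : ℝ) :
    (∫ x in a..b, rq1 c x 1)
      = (c 0 + c 2 - c 3) * (b - a) + c 1 * (b ^ 2 - a ^ 2) / 2
          + c 3 * (b ^ 3 - a ^ 3) / 3 := by
  rw [intervalIntegral.integral_congr (g := fun x => (c 0 + c 2 - c 3) + c 1 * x + c 3 * x ^ 2)
      (fun x _ => by simp only [rq1]; ring), int_poly]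

private lemma int_rq1_right (c : Fin 4 → ℝ) (a b : ℝ) :
    (∫ y in a..b, rq1 c 1 y)
      = (c 0 + c 1 + c 3) * (b - a) + c 2 * (b ^ 2 - a ^ 2) / 2
          + (-(c 3)) * (b ^ 3 - a ^ 3) / 3 := by
  rw [intervalIntegral.integral_congr (g := fun y => (c 0 + c 1 + c 3) + c 2 * y + (-(c 3)) * y ^ 2)
      (fun y _ => by simp only [rq1]; ring), int_poly]

private lemma int_rq1_left (c : Fin 4 → ℝ) (a b : ℝ) :
    (∫ y in a..b, rq1 c 0 y)
      = c 0 * (b - a) + c 2 * (b ^ 2 - a ^ 2) / 2 + (-(c 3)) * (b ^ 3 - a ^ 3) / 3 := by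
  rw [intervalIntegral.integral_congr (g := fun y => c 0 + c 2 * y + (-(c 3)) * y ^ 2)
      (fun y _ => by simp only [rq1]; ring), int_poly]

private lemma flux_eval (βm βp d e : ℝ) (cm cp : Fin 4 → ℝ) :
    fluxDefect βm βp d e cm cp =
      (βp * (cp 1 + cp 3 * (d + e)) - βm * (cm 1 + cm 3 * (d + e)))
        + (βp * (cp 2 - cp 3) - βm * (cm 2 - cm 3)) * (d - e) := by
  unfold fluxDefect
  rw [intervalIntegral.integral_congr
      (g := fun t => (βp * (cp 1 + 2 * cp 3 * d) - βm * (cm 1 + 2 * cm 3 * d)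
          + (βp * cp 2 - βm * cm 2) * (d - e))
        + ((2 * βp * cp 3 * (e - d) - 2 * βm * cm 3 * (e - d))
            + (2 * βm * cm 3 - 2 * βp * cp 3) * (d - e)) * t + 0 * t ^ 2)
      (fun t _ => by ring), int_poly]
  ring

private lemma Qpos (x y : ℝ) (hx0 : 0 < x) (hx1 : x < 1) (hy0 : 0 < y) (hy1 : y < 1) :
    0 < 5*y - 6*y^2 + 5*y^3 + 5*x - 6*x*y + x*y^2 - 6*x^2 + x^2*y + 5*x^3 := by
  nlinarith [mul_nonneg hy0.le (sq_nonneg (5*y - 3)), mul_nonneg hx0.le (sq_nonneg (5*x - 3)),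
    mul_pos hx0 (sub_pos.2 hy1), mul_pos hy0 (sub_pos.2 hx1),
    mul_nonneg (mul_nonneg hx0.le hy0.le) (add_pos hx0 hy0).le]

set_option maxHeartbeats 4000000 in
set_option maxRecDepth 100000 in
theorem edge_mean_unisolvency
    (βm βp : ℝ) (hβm : 0 < βm) (hβp : 0 < βp)
    (d e : ℝ) (hd : d ∈ Ioo (0:ℝ) 1) (he : e ∈ Ioo (0:ℝ) 1)
    (v : Fin 4 → ℝ) :
    ∃! c : (Fin 4 → ℝ) × (Fin 4 → ℝ),
      J1 d e c.1 c.2 ∧ J2 c.1 c.2 ∧ J3 βm βp d e c.1 c.2 ∧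
        dofI d e c.1 c.2 = v := by
  obtain ⟨hd0, hd1⟩ := hd
  obtain ⟨he0, he1⟩ := he
  have hPA : 0 < (5*e + (-6)*e^2 + 5*e^3 + 5*d + (-6)*d*e + 1*d*e^2 + (-6)*d^2 + 1*d^2*e + 5*d^3) := by
    have := Qpos d e hd0 hd1 he0 he1; nlinarith [this]
  have hPB : 0 < (4 + (-5)*e + 10*e^2 + (-5)*e^3 + (-5)*d + (-2)*d*e + (-1)*d*e^2 + 10*d^2 + (-1)*d^2*e + (-5)*d^3) := by
    have := Qpos (1-d) (1-e) (by linarith) (by linarith) (by linarith) (by linarith)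
    nlinarith [this]
  have hK : (βp * (5*e + (-6)*e^2 + 5*e^3 + 5*d + (-6)*d*e + 1*d*e^2 + (-6)*d^2 + 1*d^2*e + 5*d^3) + βm * (4 + (-5)*e + 10*e^2 + (-5)*e^3 + (-5)*d + (-2)*d*e + (-1)*d*e^2 + 10*d^2 + (-1)*d^2*e + (-5)*d^3)) ≠ 0 := ne_of_gt (add_pos (mul_pos hβp hPA) (mul_pos hβm hPB))
  have hKinv : (βp * (5*e + (-6)*e^2 + 5*e^3 + 5*d + (-6)*d*e + 1*d*e^2 + (-6)*d^2 + 1*d^2*e + 5*d^3) + βm * (4 + (-5)*e + 10*e^2 + (-5)*e^3 + (-5)*d + (-2)*d*e + (-1)*d*e^2 + 10*d^2 + (-1)*d^2*e + (-5)*d^3)) * (βp * (5*e + (-6)*e^2 + 5*e^3 + 5*d + (-6)*d*e + 1*d*e^2 + (-6)*d^2 + 1*d^2*e + 5*d^3) + βm * (4 + (-5)*e + 10*e^2 + (-5)*e^3 + (-5)*d + (-2)*d*e + (-1)*d*e^2 + 10*d^2 + (-1)*d^2*e + (-5)*d^3))⁻¹ = 1 := mul_inv_cancel₀ hK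
  refine ⟨(![(((6*βp*e + (-6)*βp*e^2 + 4*βp*e^3 + (-7)*βp*d*e + 2*βp*d*e^2 + 4*βp*d^2 + 3*βm + (-6)*βm*e + 9*βm*e^2 + (-4)*βm*e^3 + 1*βm*d*e + (-2)*βm*d*e^2 + (-1)*βm*d^2) * v 0 + ((-2)*βp*e + 4*βp*e^2 + (-2)*βp*e^3 + (-1)*βp*d*e^2 + (-3)*βp*d^2 + 2*βp*d^2*e + 1*βp*d^3 + (-1)*βm + 2*βm*e + (-5)*βm*e^2 + 2*βm*e^3 + 2*βm*d*e + 1*βm*d*e^2 + 2*βm*d^2 + (-2)*βm*d^2*e + (-1)*βm*d^3) * v 1 + (1*βp*e + (-3)*βp*e^2 + (-5)*βp*d + 7*βp*d*e + 5*βp*d^2 + (-4)*βp*d^2*e + (-2)*βp*d^3 + (-1)*βm + (-1)*βm*e + 2*βm*e^2 + 5*βm*d + (-5)*βm*d*e + (-6)*βm*d^2 + 4*βm*d^2*e + 2*βm*d^3) * v 2 + ((-1)*βp*e^2 + 3*βp*e^3 + 10*βp*d + (-6)*βp*d*e + (-12)*βp*d^2 + 3*βp*d^2*e + 6*βp*d^3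 + 3*βm + 4*βm*e^2 + (-3)*βm*e^3 + (-10)*βm*d + 15*βm*d^2 + (-3)*βm*d^2*e + (-6)*βm*d^3) * v 3) / (βp * (5*e + (-6)*e^2 + 5*e^3 + 5*d + (-6)*d*e + 1*d*e^2 + (-6)*d^2 + 1*d^2*e + 5*d^3) + βm * (4 + (-5)*e + 10*e^2 + (-5)*e^3 + (-5)*d + (-2)*d*e + (-1)*d*e^2 + 10*d^2 + (-1)*d^2*e + (-5)*d^3))), (((6*βp + (-2)*βp*e + (-2)*βp*e^2 + 6*βp*e^3 + (-10)*βp*d + 6*βp*d*e + (-6)*βp*d*e^2 + 8*βp*d^2 + 2*βm*e + 8*βm*e^2 + (-6)*βm*e^3 + 10*βm*d + (-18)*βm*d*e + 6*βm*d*e^2 + (-2)*βm*d^2) * v 0 + ((-2)*βp + 6*βp*e + (-6)*βp*e^2 + 2*βp*e^3 + 6*βp*d + (-12)*βp*d*e + 4*βp*d*e^2 + (-6)*βp*d^2 + 4*βp*d^2*e + 2*βp*d^3 + (-6)*βm*e + 4*βm*e^2 + (-2)*βm*e^3 + (-6)*βm*d + 16*βm*d*e + (-4)*βm*d*e^2 +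 4*βm*d^2 + (-4)*βm*d^2*e + (-2)*βm*d^3) * v 1 + (6*βp + (-10)*βp*e + 8*βp*e^2 + (-2)*βp*d + 6*βp*d*e + (-2)*βp*d^2 + (-6)*βp*d^2*e + 6*βp*d^3 + 10*βm*e + (-2)*βm*e^2 + 2*βm*d + (-18)*βm*d*e + 8*βm*d^2 + 6*βm*d^2*e + (-6)*βm*d^3) * v 2 + ((-10)*βp + 6*βp*e + (-8)*βp*e^3 + 6*βp*d + 2*βp*d*e^2 + 2*βp*d^2*e + (-8)*βp*d^3 + (-6)*βm*e + (-10)*βm*e^2 + 8*βm*e^3 + (-6)*βm*d + 20*βm*d*e + (-2)*βm*d*e^2 + (-10)*βm*d^2 + (-2)*βm*d^2*e + 8*βm*d^3) * v 3) / (βp * (5*e + (-6)*e^2 + 5*e^3 + 5*d + (-6)*d*e + 1*d*e^2 + (-6)*d^2 + 1*d^2*e + 5*d^3) + βm * (4 + (-5)*e + 10*e^2 + (-5)*e^3 + (-5)*d + (-2)*d*e + (-1)*d*e^2 + 10*d^2 + (-1)*d^2*e + (-5)*d^3))), ((((-14)*βp*e + 14*βp*e^2 + (-12)*βp*e^3 +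 (-2)*βp*d + 14*βp*d*e + (-10)*βp*d^2 + (-10)*βm + 14*βm*e + (-24)*βm*e^2 + 12*βm*e^3 + 2*βm*d + 6*βm*d*e) * v 0 + (8*βp*e + (-10)*βp*e^2 + 6*βp*e^3 + 4*βp*d + 4*βp*d^2 + (-6)*βp*d^2*e + 6*βm + (-8)*βm*e + 16*βm*e^2 + (-6)*βm*e^3 + (-4)*βm*d + (-12)*βm*d*e + 2*βm*d^2 + 6*βm*d^2*e) * v 1 + ((-4)*βp*e + 4*βp*e^2 + 8*βp*d + (-14)*βp*d*e + (-8)*βp*d^2 + 12*βp*d^2*e + (-2)*βm + 4*βm*e + (-6)*βm*e^2 + (-8)*βm*d + 18*βm*d*e + 6*βm*d^2 + (-12)*βm*d^2*e) * v 2 + (10*βp*e + (-8)*βp*e^2 + 6*βp*e^3 + (-10)*βp*d + 14*βp*d^2 + (-6)*βp*d^2*e + 6*βm + (-10)*βm*e + 14*βm*e^2 + (-6)*βm*e^3 + 10*βm*d + (-12)*βm*d*e + (-8)*βm*d^2 + 6*βm*d^2*e) * v 3) / (βp * (5*e + (-6)*e^2 + 5*e^3 + 5*d + (-6)*d*e +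 1*d*e^2 + (-6)*d^2 + 1*d^2*e + 5*d^3) + βm * (4 + (-5)*e + 10*e^2 + (-5)*e^3 + (-5)*d + (-2)*d*e + (-1)*d*e^2 + 10*d^2 + (-1)*d^2*e + (-5)*d^3))), ((((-3)*βp*e + 3*βp*e^2 + (-6)*βp*e^3 + (-3)*βp*d + 6*βp*d*e^2 + (-3)*βp*d^2 + (-6)*βm + 3*βm*e + (-9)*βm*e^2 + 6*βm*e^3 + 3*βm*d + 12*βm*d*e + (-6)*βm*d*e^2 + (-3)*βm*d^2) * v 0 + (6*βp*e + (-3)*βp*e^2 + 3*βp*e^3 + 6*βp*d + (-3)*βp*d*e^2 + (-3)*βp*d^2 + (-3)*βp*d^2*e + 3*βp*d^3 + 6*βm + (-6)*βm*e + 9*βm*e^2 + (-3)*βm*e^3 + (-6)*βm*d + (-12)*βm*d*e + 3*βm*d*e^2 + 9*βm*d^2 + 3*βm*d^2*e + (-3)*βm*d^3) * v 1 + ((-3)*βp*e + (-3)*βp*e^2 + (-3)*βp*d + 3*βp*d^2 + 6*βp*d^2*e + (-6)*βp*d^3 + (-6)*βm + 3*βm*e + (-3)*βm*e^2 + 3*βm*d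 + 12*βm*d*e + (-9)*βm*d^2 + (-6)*βm*d^2*e + 6*βm*d^3) * v 2 + (3*βp*e^2 + 3*βp*e^3 + (-3)*βp*d*e^2 + 3*βp*d^2 + (-3)*βp*d^2*e + 3*βp*d^3 + 6*βm + 3*βm*e^2 + (-3)*βm*e^3 + (-12)*βm*d*e + 3*βm*d*e^2 + 3*βm*d^2 + 3*βm*d^2*e + (-3)*βm*d^3) * v 3) / (βp * (5*e + (-6)*e^2 + 5*e^3 + 5*d + (-6)*d*e + 1*d*e^2 + (-6)*d^2 + 1*d^2*e + 5*d^3) + βm * (4 + (-5)*e + 10*e^2 + (-5)*e^3 + (-5)*d + (-2)*d*e + (-1)*d*e^2 + 10*d^2 + (-1)*d^2*e + (-5)*d^3)))], ![(((6*βp*e + (-6)*βp*e^2 + 4*βp*e^3 + 6*βp*d + (-9)*βp*d*e + 2*βp*d*e^2 + (-6)*βp*d^2 + 3*βm + (-6)*βm*e + 9*βm*e^2 + (-4)*βm*e^3 + (-6)*βm*d + 3*βm*d*e + (-2)*βm*d*e^2 + 9*βm*d^2) * v 0 + ((-2)*βp*e + 4*βp*e^2 + (-2)*βp*e^3 + (-2)*βp*d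 + 6*βp*d*e + (-1)*βp*d*e^2 + 3*βp*d^2 + 2*βp*d^2*e + 1*βp*d^3 + (-1)*βm + 2*βm*e + (-5)*βm*e^2 + 2*βm*e^3 + 2*βm*d + (-4)*βm*d*e + 1*βm*d*e^2 + (-4)*βm*d^2 + (-2)*βm*d^2*e + (-1)*βm*d^3) * v 1 + (1*βp*e + (-3)*βp*e^2 + 1*βp*d + (-3)*βp*d*e + 3*βp*d^2 + (-4)*βp*d^2*e + (-2)*βp*d^3 + (-1)*βm + (-1)*βm*e + 2*βm*e^2 + (-1)*βm*d + 5*βm*d*e + (-4)*βm*d^2 + 4*βm*d^2*e + 2*βm*d^3) * v 2 + ((-1)*βp*e^2 + 3*βp*e^3 + (-6)*βp*d^2 + 3*βp*d^2*e + 6*βp*d^3 + 3*βm + 4*βm*e^2 + (-3)*βm*e^3 + (-6)*βm*d*e + 9*βm*d^2 + (-3)*βm*d^2*e + (-6)*βm*d^3) * v 3) / (βp * (5*e + (-6)*e^2 + 5*e^3 + 5*d + (-6)*d*e + 1*d*e^2 + (-6)*d^2 + 1*d^2*e + 5*d^3) + βm * (4 + (-5)*e + 10*e^2 + (-5)*e^3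 + (-5)*d + (-2)*d*e + (-1)*d*e^2 + 10*d^2 + (-1)*d^2*e + (-5)*d^3))), ((((-2)*βp*e^2 + 6*βp*e^3 + 6*βp*d*e + (-6)*βp*d*e^2 + 8*βp*d^2 + 6*βm + 8*βm*e^2 + (-6)*βm*e^3 + (-18)*βm*d*e + 6*βm*d*e^2 + (-2)*βm*d^2) * v 0 + ((-6)*βp*e^2 + 2*βp*e^3 + (-12)*βp*d*e + 4*βp*d*e^2 + (-6)*βp*d^2 + 4*βp*d^2*e + 2*βp*d^3 + (-2)*βm + 4*βm*e^2 + (-2)*βm*e^3 + 16*βm*d*e + (-4)*βm*d*e^2 + 4*βm*d^2 + (-4)*βm*d^2*e + (-2)*βm*d^3) * v 1 + (8*βp*e^2 + 6*βp*d*e + (-2)*βp*d^2 + (-6)*βp*d^2*e + 6*βp*d^3 + 6*βm + (-2)*βm*e^2 + (-18)*βm*d*e + 8*βm*d^2 + 6*βm*d^2*e + (-6)*βm*d^3) * v 2 + ((-8)*βp*e^3 + 2*βp*d*e^2 + 2*βp*d^2*e + (-8)*βp*d^3 + (-10)*βm + (-10)*βm*e^2 + 8*βm*e^3 + 20*βm*d*e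 + (-2)*βm*d*e^2 + (-10)*βm*d^2 + (-2)*βm*d^2*e + 8*βm*d^3) * v 3) / (βp * (5*e + (-6)*e^2 + 5*e^3 + 5*d + (-6)*d*e + 1*d*e^2 + (-6)*d^2 + 1*d^2*e + 5*d^3) + βm * (4 + (-5)*e + 10*e^2 + (-5)*e^3 + (-5)*d + (-2)*d*e + (-1)*d*e^2 + 10*d^2 + (-1)*d^2*e + (-5)*d^3))), ((((-8)*βp*e + 12*βp*e^2 + (-12)*βp*e^3 + (-8)*βp*d + 6*βp*d*e + (-10)*βm + 8*βm*e + (-22)*βm*e^2 + 12*βm*e^3 + 8*βm*d + 14*βm*d*e + (-10)*βm*d^2) * v 0 + (6*βp*e + (-4)*βp*e^2 + 6*βp*e^3 + 6*βp*d + (-2)*βp*d^2 + (-6)*βp*d^2*e + 6*βm + (-6)*βm*e + 10*βm*e^2 + (-6)*βm*e^3 + (-6)*βm*d + (-12)*βm*d*e + 8*βm*d^2 + 6*βm*d^2*e) * v 1 + (2*βp*e + (-6)*βp*e^2 + 2*βp*d + (-6)*βp*d*e + (-6)*βp*d^2 + 12*βp*d^2*e + (-2)*βm + (-2)*βm*e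 + 4*βm*e^2 + (-2)*βm*d + 10*βm*d*e + 4*βm*d^2 + (-12)*βm*d^2*e) * v 2 + ((-2)*βp*e^2 + 6*βp*e^3 + 8*βp*d^2 + (-6)*βp*d^2*e + 6*βm + 8*βm*e^2 + (-6)*βm*e^3 + (-12)*βm*d*e + (-2)*βm*d^2 + 6*βm*d^2*e) * v 3) / (βp * (5*e + (-6)*e^2 + 5*e^3 + 5*d + (-6)*d*e + 1*d*e^2 + (-6)*d^2 + 1*d^2*e + 5*d^3) + βm * (4 + (-5)*e + 10*e^2 + (-5)*e^3 + (-5)*d + (-2)*d*e + (-1)*d*e^2 + 10*d^2 + (-1)*d^2*e + (-5)*d^3))), ((((-3)*βp*e + 3*βp*e^2 + (-6)*βp*e^3 + (-3)*βp*d + 6*βp*d*e^2 + (-3)*βp*d^2 + (-6)*βm + 3*βm*e + (-9)*βm*e^2 + 6*βm*e^3 + 3*βm*d + 12*βm*d*e + (-6)*βm*d*e^2 + (-3)*βm*d^2) * v 0 + (6*βp*e + (-3)*βp*e^2 + 3*βp*e^3 + 6*βp*d + (-3)*βp*d*e^2 + (-3)*βp*d^2 + (-3)*βp*d^2*e + 3*βp*d^3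 + 6*βm + (-6)*βm*e + 9*βm*e^2 + (-3)*βm*e^3 + (-6)*βm*d + (-12)*βm*d*e + 3*βm*d*e^2 + 9*βm*d^2 + 3*βm*d^2*e + (-3)*βm*d^3) * v 1 + ((-3)*βp*e + (-3)*βp*e^2 + (-3)*βp*d + 3*βp*d^2 + 6*βp*d^2*e + (-6)*βp*d^3 + (-6)*βm + 3*βm*e + (-3)*βm*e^2 + 3*βm*d + 12*βm*d*e + (-9)*βm*d^2 + (-6)*βm*d^2*e + 6*βm*d^3) * v 2 + (3*βp*e^2 + 3*βp*e^3 + (-3)*βp*d*e^2 + 3*βp*d^2 + (-3)*βp*d^2*e + 3*βp*d^3 + 6*βm + 3*βm*e^2 + (-3)*βm*e^3 + (-12)*βm*d*e + 3*βm*d*e^2 + 3*βm*d^2 + 3*βm*d^2*e + (-3)*βm*d^3) * v 3) / (βp * (5*e + (-6)*e^2 + 5*e^3 + 5*d + (-6)*d*e + 1*d*e^2 + (-6)*d^2 + 1*d^2*e + 5*d^3) + βm * (4 + (-5)*e + 10*e^2 + (-5)*e^3 + (-5)*d + (-2)*d*e + (-1)*d*e^2 + 10*d^2 + (-1)*d^2*e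 + (-5)*d^3)))]), ⟨?_, ?_, ?_, ?_⟩, ?_⟩
  · -- J1
    unfold J1
    constructor <;>
      (simp only [rq1, Matrix.cons_val_zero, Matrix.cons_val_one, Matrix.head_cons,
        Matrix.cons_val_two, Matrix.tail_cons, Matrix.cons_val_three, Fin.zero_eta, Fin.mk_one,
        Fin.reduceFinMk]
       ring)
  · -- J2
    unfold J2
    simp only [Matrix.cons_val_three, Matrix.tail_cons, Matrix.head_cons, Matrix.cons_val_zero,
      Matrix.cons_val_one, Matrix.cons_val_two] <;> ring
  · -- J3
    unfold J3
    rw [flux_eval]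
    simp only [Matrix.cons_val_zero, Matrix.cons_val_one, Matrix.head_cons,
      Matrix.cons_val_two, Matrix.tail_cons, Matrix.cons_val_three, Fin.zero_eta, Fin.mk_one,
        Fin.reduceFinMk]
    ring
  · -- dofI
    funext i
    fin_cases i <;>
      simp only [dofI, Matrix.cons_val_zero, Matrix.cons_val_one, Matrix.head_cons,
        Matrix.cons_val_two, Matrix.tail_cons, Matrix.cons_val_three, Fin.zero_eta, Fin.mk_one,
        Fin.reduceFinMk, Fin.isValue]
    · rw [int_rq1_bottom, int_rq1_bottom]
      simp only [Matrix.cons_val_zero, Matrix.cons_val_one, Matrix.head_cons,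
        Matrix.cons_val_two, Matrix.tail_cons, Matrix.cons_val_three, Fin.zero_eta, Fin.mk_one,
        Fin.reduceFinMk]
      linear_combination (v 0) * hKinv
    · rw [int_rq1_right]
      simp only [Matrix.cons_val_zero, Matrix.cons_val_one, Matrix.head_cons,
        Matrix.cons_val_two, Matrix.tail_cons, Matrix.cons_val_three, Fin.zero_eta, Fin.mk_one,
        Fin.reduceFinMk]
      linear_combination (v 1) * hKinv
    · rw [int_rq1_top, int_rq1_top]
      simp only [Matrix.cons_val_zero, Matrix.cons_val_one, Matrix.head_cons,
        Matrix.cons_val_two, Matrix.tail_cons, Matrix.cons_val_three, Fin.zero_eta, Fin.mk_one,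
        Fin.reduceFinMk]
      linear_combination (v 2) * hKinv
    · rw [int_rq1_left]
      simp only [Matrix.cons_val_zero, Matrix.cons_val_one, Matrix.head_cons,
        Matrix.cons_val_two, Matrix.tail_cons, Matrix.cons_val_three, Fin.zero_eta, Fin.mk_one,
        Fin.reduceFinMk]
      linear_combination (v 3) * hKinv
  · -- uniqueness
    rintro ⟨ym, yp⟩ ⟨hJ1, hJ2, hJ3, hdof⟩
    obtain ⟨h1, h2⟩ := hJ1
    simp only [rq1] at h1 h2
    have h3 : ym 3 = yp 3 := hJ2
    unfold J3 at hJ3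
    rw [flux_eval] at hJ3
    have h4 := hJ3
    have e5 := congrFun hdof 0
    have e6 := congrFun hdof 1
    have e7 := congrFun hdof 2
    have e8 := congrFun hdof 3
    simp only [dofI, Matrix.cons_val_zero, Matrix.cons_val_one, Matrix.head_cons,
      Matrix.cons_val_two, Matrix.tail_cons, Matrix.cons_val_three, Fin.zero_eta, Fin.mk_one,
        Fin.reduceFinMk, Fin.isValue]
      at e5 e6 e7 e8
    rw [int_rq1_bottom, int_rq1_bottom] at e5
    rw [int_rq1_right] at e6
    rw [int_rq1_top, int_rq1_top] at e7
    rw [int_rq1_left] at e8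
    refine Prod.ext (funext fun i => ?_) (funext fun i => ?_) <;> fin_cases i
    · show ym 0 = _
      simp only [Matrix.cons_val_zero, Matrix.cons_val_one, Matrix.head_cons,
        Matrix.cons_val_two, Matrix.tail_cons, Matrix.cons_val_three, Fin.zero_eta, Fin.mk_one,
        Fin.reduceFinMk]
      rw [eq_div_iff hK]
      linear_combination (5*βp*e + (-11/2)*βp*e^2 + (7/2)*βp*e^3 + (-9)*βp*d*e + 7*βp*d*e^2 + (-4)*βp*d*e^3 + (13/2)*βp*d^2*e + (-2)*βp*d^2*e^2 + (-2)*βp*d^3 + (5/2)*βm + (-5)*βm*e + (13/2)*βm*e^2 + (-3)*βm*e^3 + (-3)*βm*d + 8*βm*d*e + (-21/2)*βm*d*e^2 + 4*βm*d*e^3 + (-2)*βm*d^2*e + 2*βm*d^2*e^2 + (1/2)*βm*d^3) * h1 + ((-1/2)*βp*e^2 + (3/2)*βp*e^3 + (-5)*βp*d + 8*βp*d*e + (-7)*βp*d*e^2 + 6*βp*d^2 + (-13/2)*βp*d^2*e + 4*βp*d^2*e^2 + (-3)*βp*d^3 + 2*βp*d^3*e + (-3/2)*βm + 1*βm*e +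 (1/2)*βm*e^2 + (-1)*βm*e^3 + 5*βm*d + (-9)*βm*d*e + (11/2)*βm*d*e^2 + (-5)*βm*d^2 + 9*βm*d^2*e + (-4)*βm*d^2*e^2 + (3/2)*βm*d^3 + (-2)*βm*d^3*e) * h2 + ((1/6)*βp*e^2 + (-1/2)*βp*e^3 + (1/6)*βp*e^4 + (-1/2)*βp*e^5 + (-5/3)*βp*d + 1*βp*d*e + 5*βp*d*e^2 + (-19/3)*βp*d*e^3 + (14/3)*βp*d*e^4 + 2*βp*d^2 + (-11/2)*βp*d^2*e + (-1/2)*βp*d^2*e^2 + (4/3)*βp*d^2*e^3 + (-8/3)*βp*d^2*e^4 + (-1)*βp*d^3 + 7*βp*d^3*e + (-2)*βp*d^3*e^2 + (4/3)*βp*d^3*e^3 + (-25/6)*βp*d^4*e + (4/3)*βp*d^4*e^2 + (2/3)*βp*d^5 + (-1/2)*βm + (-2/3)*βm*e^2 + (1/3)*βm*e^3 + (-1/6)*βm*e^4 + (1/3)*βm*e^5 + (5/3)*βm*d + 1*βm*d*e + (-9/2)*βm*d*e^2 + (22/3)*βm*d*e^3 + (-23/6)*βm*d*e^4 + (-5/2)*βm*d^2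 + 4*βm*d^2*e + (-3/2)*βm*d^2*e^2 + (-4)*βm*d^2*e^3 + (8/3)*βm*d^2*e^4 + (3/2)*βm*d^3 + (-6)*βm*d^3*e + 6*βm*d^3*e^2 + (-4/3)*βm*d^3*e^3 + (5/3)*βm*d^4*e + (-4/3)*βm*d^4*e^2 + (-1/6)*βm*d^5) * h3 + ((-3/2)*e + (1/2)*e^2 + (5/2)*d + (-3/2)*d^2) * h4 + (6*βp*e + (-6)*βp*e^2 + 4*βp*e^3 + (-7)*βp*d*e + 2*βp*d*e^2 + 4*βp*d^2 + 3*βm + (-6)*βm*e + 9*βm*e^2 + (-4)*βm*e^3 + 1*βm*d*e + (-2)*βm*d*e^2 + (-1)*βm*d^2) * e5 + ((-2)*βp*e + 4*βp*e^2 + (-2)*βp*e^3 + (-1)*βp*d*e^2 + (-3)*βp*d^2 + 2*βp*d^2*e + 1*βp*d^3 + (-1)*βm + 2*βm*e + (-5)*βm*e^2 + 2*βm*e^3 + 2*βm*d*e + 1*βm*d*e^2 + 2*βm*d^2 + (-2)*βm*d^2*e + (-1)*βm*d^3) * e6 + (1*βp*e + (-3)*βp*e^2 + (-5)*βp*d +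 7*βp*d*e + 5*βp*d^2 + (-4)*βp*d^2*e + (-2)*βp*d^3 + (-1)*βm + (-1)*βm*e + 2*βm*e^2 + 5*βm*d + (-5)*βm*d*e + (-6)*βm*d^2 + 4*βm*d^2*e + 2*βm*d^3) * e7 + ((-1)*βp*e^2 + 3*βp*e^3 + 10*βp*d + (-6)*βp*d*e + (-12)*βp*d^2 + 3*βp*d^2*e + 6*βp*d^3 + 3*βm + 4*βm*e^2 + (-3)*βm*e^3 + (-10)*βm*d + 15*βm*d^2 + (-3)*βm*d^2*e + (-6)*βm*d^3) * e8
    · show ym 1 = _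
      simp only [Matrix.cons_val_zero, Matrix.cons_val_one, Matrix.head_cons,
        Matrix.cons_val_two, Matrix.tail_cons, Matrix.cons_val_three, Fin.zero_eta, Fin.mk_one,
        Fin.reduceFinMk]
      rw [eq_div_iff hK]
      linear_combination (5*βp + (-3)*βp*e + 4*βp*e^3 + (-9)*βp*d + 2*βp*d*e + 1*βp*d*e^2 + (-6)*βp*d*e^3 + 10*βp*d^2 + (-7)*βp*d^2*e + 6*βp*d^2*e^2 + (-4)*βp*d^3 + (-1)*βm*e + 10*βm*e^2 + (-7)*βm*e^3 + 7*βm*d + (-12)*βm*d*e + (-4)*βm*d*e^2 + 6*βm*d*e^3 + (-10)*βm*d^2 + 16*βm*d^2*e + (-6)*βm*d^2*e^2 + 1*βm*d^3) * h1 + (5*βp + (-9)*βp*e + 10*βp*e^2 + (-4)*βp*e^3 + (-3)*βp*d + 2*βp*d*e + (-7)*βp*d*e^2 + 1*βp*d^2*e + 6*βp*d^2*e^2 + 4*βp*d^3 + (-6)*βp*d^3*e + 7*βm*e + (-10)*βm*e^2 + 1*βm*e^3 + (-1)*βm*d + (-12)*βm*d*e + 16*βm*d*e^2 + 10*βm*d^2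 + (-4)*βm*d^2*e + (-6)*βm*d^2*e^2 + (-7)*βm*d^3 + 6*βm*d^3*e) * h2 + ((5/3)*βp + (-1)*βp*e + (-5)*βp*e^2 + (25/3)*βp*e^3 + (-20/3)*βp*e^4 + (4/3)*βp*e^5 + (-1)*βp*d + (8/3)*βp*d*e^2 + (-4/3)*βp*d*e^3 + 5*βp*d*e^4 + (-5)*βp*d^2 + (8/3)*βp*d^2*e + (-13/3)*βp*d^2*e^3 + (-4)*βp*d^2*e^4 + (25/3)*βp*d^3 + (-4/3)*βp*d^3*e + (-13/3)*βp*d^3*e^2 + 8*βp*d^3*e^3 + (-20/3)*βp*d^4 + 5*βp*d^4*e + (-4)*βp*d^4*e^2 + (4/3)*βp*d^5 + (-3)*βm*e + (20/3)*βm*e^2 + (-34/3)*βm*e^3 + (20/3)*βm*e^4 + (-1/3)*βm*e^5 + (-3)*βm*d + (20/3)*βm*d*e + (-5/3)*βm*d*e^2 + (34/3)*βm*d*e^3 + (-10)*βm*d*e^4 + (20/3)*βm*d^2 + (-5/3)*βm*d^2*e + (-20)*βm*d^2*e^2 + (25/3)*βm*d^2*e^3 + 4*βm*d^2*e^4 +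 (-34/3)*βm*d^3 + (34/3)*βm*d^3*e + (25/3)*βm*d^3*e^2 + (-8)*βm*d^3*e^3 + (20/3)*βm*d^4 + (-10)*βm*d^4*e + 4*βm*d^4*e^2 + (-1/3)*βm*d^5) * h3 + ((-4) + 5*e + (-3)*e^2 + 5*d + (-3)*d^2) * h4 + (6*βp + (-2)*βp*e + (-2)*βp*e^2 + 6*βp*e^3 + (-10)*βp*d + 6*βp*d*e + (-6)*βp*d*e^2 + 8*βp*d^2 + 2*βm*e + 8*βm*e^2 + (-6)*βm*e^3 + 10*βm*d + (-18)*βm*d*e + 6*βm*d*e^2 + (-2)*βm*d^2) * e5 + ((-2)*βp + 6*βp*e + (-6)*βp*e^2 + 2*βp*e^3 + 6*βp*d + (-12)*βp*d*e + 4*βp*d*e^2 + (-6)*βp*d^2 + 4*βp*d^2*e + 2*βp*d^3 + (-6)*βm*e + 4*βm*e^2 + (-2)*βm*e^3 + (-6)*βm*d + 16*βm*d*e + (-4)*βm*d*e^2 + 4*βm*d^2 + (-4)*βm*d^2*e + (-2)*βm*d^3) * e6 + (6*βp + (-10)*βp*e + 8*βp*e^2 + (-2)*βp*d + 6*βp*d*e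 + (-2)*βp*d^2 + (-6)*βp*d^2*e + 6*βp*d^3 + 10*βm*e + (-2)*βm*e^2 + 2*βm*d + (-18)*βm*d*e + 8*βm*d^2 + 6*βm*d^2*e + (-6)*βm*d^3) * e7 + ((-10)*βp + 6*βp*e + (-8)*βp*e^3 + 6*βp*d + 2*βp*d*e^2 + 2*βp*d^2*e + (-8)*βp*d^3 + (-6)*βm*e + (-10)*βm*e^2 + 8*βm*e^3 + (-6)*βm*d + 20*βm*d*e + (-2)*βm*d*e^2 + (-10)*βm*d^2 + (-2)*βm*d^2*e + 8*βm*d^3) * e8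
    · show ym 2 = _
      simp only [Matrix.cons_val_zero, Matrix.cons_val_one, Matrix.head_cons,
        Matrix.cons_val_two, Matrix.tail_cons, Matrix.cons_val_three, Fin.zero_eta, Fin.mk_one,
        Fin.reduceFinMk]
      rw [eq_div_iff hK]
      linear_combination ((-10)*βp*e + 10*βp*e^2 + (-8)*βp*e^3 + 20*βp*d*e + (-15)*βp*d*e^2 + 12*βp*d*e^3 + 1*βp*d^2 + (-12)*βp*d^2*e + 5*βp*d^3 + (-7)*βm + 10*βm*e + (-16)*βm*e^2 + 9*βm*e^3 + 10*βm*d + (-14)*βm*d*e + 24*βm*d*e^2 + (-12)*βm*d*e^3 + (-1)*βm*d^2 + (-3)*βm*d^2*e) * h1 + (2*βp*e^2 + (-2)*βp*e^3 + 10*βp*d + (-14)*βp*d*e + 15*βp*d*e^2 + (-13)*βp*d^2 + 12*βp*d^2*e + (-12)*βp*d^2*e^2 + 5*βp*d^3 + 1*βm + 2*βm*e + (-2)*βm*e^2 + 3*βm*e^3 + (-10)*βm*d + 20*βm*d*e + (-18)*βm*d*e^2 + 7*βm*d^2 + (-15)*βm*d^2*e + 12*βm*d^2*e^2) * h2 +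 ((10/3)*βp*e + (-14/3)*βp*e^2 + 4*βp*e^3 + (-2/3)*βp*e^4 + (2/3)*βp*e^5 + (20/3)*βp*d + (-6)*βp*d*e + (-9)*βp*d*e^2 + (34/3)*βp*d*e^3 + (-31/3)*βp*d*e^4 + (-25/3)*βp*d^2 + 12*βp*d^2*e + 3*βp*d^2*e^2 + (-4/3)*βp*d^2*e^3 + 8*βp*d^2*e^4 + 5*βp*d^3 + (-46/3)*βp*d^3*e + (16/3)*βp*d^3*e^2 + (-8)*βp*d^3*e^3 + (-1/3)*βp*d^4 + (22/3)*βp*d^4*e + (-5/3)*βp*d^5 + 3*βm + (-10/3)*βm*e + (23/3)*βm*e^2 + (-13/3)*βm*e^3 + (2/3)*βm*e^4 + (-1)*βm*e^5 + (-20/3)*βm*d + (-6)*βm*d*e + 10*βm*d*e^2 + (-52/3)*βm*d*e^3 + 12*βm*d*e^4 + (34/3)*βm*d^2 + (-7)*βm*d^2*e + 9*βm*d^2*e^2 + 4*βm*d^2*e^3 + (-8)*βm*d^2*e^4 + (-20/3)*βm*d^3 + (28/3)*βm*d^3*e + (-16)*βm*d^3*e^2 + 8*βm*d^3*e^3 +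 (1/3)*βm*d^4 + 1*βm*d^4*e) * h3 + (1*e + 1*e^2 + (-7)*d + 5*d^2) * h4 + ((-14)*βp*e + 14*βp*e^2 + (-12)*βp*e^3 + (-2)*βp*d + 14*βp*d*e + (-10)*βp*d^2 + (-10)*βm + 14*βm*e + (-24)*βm*e^2 + 12*βm*e^3 + 2*βm*d + 6*βm*d*e) * e5 + (8*βp*e + (-10)*βp*e^2 + 6*βp*e^3 + 4*βp*d + 4*βp*d^2 + (-6)*βp*d^2*e + 6*βm + (-8)*βm*e + 16*βm*e^2 + (-6)*βm*e^3 + (-4)*βm*d + (-12)*βm*d*e + 2*βm*d^2 + 6*βm*d^2*e) * e6 + ((-4)*βp*e + 4*βp*e^2 + 8*βp*d + (-14)*βp*d*e + (-8)*βp*d^2 + 12*βp*d^2*e + (-2)*βm + 4*βm*e + (-6)*βm*e^2 + (-8)*βm*d + 18*βm*d*e + 6*βm*d^2 + (-12)*βm*d^2*e) * e7 + (10*βp*e + (-8)*βp*e^2 + 6*βp*e^3 + (-10)*βp*d + 14*βp*d^2 + (-6)*βp*d^2*e + 6*βm + (-10)*βm*e + 14*βm*e^2 + (-6)*βm*e^3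 + 10*βm*d + (-12)*βm*d*e + (-8)*βm*d^2 + 6*βm*d^2*e) * e8
    · show ym 3 = _
      simp only [Matrix.cons_val_zero, Matrix.cons_val_one, Matrix.head_cons,
        Matrix.cons_val_two, Matrix.tail_cons, Matrix.cons_val_three, Fin.zero_eta, Fin.mk_one,
        Fin.reduceFinMk]
      rw [eq_div_iff hK]
      linear_combination ((-3/2)*βp*e^2 + (-3/2)*βp*e^3 + 3*βp*d*e + (-3/2)*βp*d*e^2 + 6*βp*d*e^3 + (3/2)*βp*d^2 + (3/2)*βp*d^2*e + (-6)*βp*d^2*e^2 + (3/2)*βp*d^3 + (-3)*βm + (-9/2)*βm*e^2 + (9/2)*βm*e^3 + 6*βm*d + 3*βm*d*e + (9/2)*βm*d*e^2 + (-6)*βm*d*e^3 + (-3/2)*βm*d^2 + (-21/2)*βm*d^2*e + 6*βm*d^2*e^2 + (3/2)*βm*d^3) * h1 + ((3/2)*βp*e^2 + (3/2)*βp*e^3 + 3*βp*d*e + (3/2)*βp*d*e^2 + (-3/2)*βp*d^2 + (-3/2)*βp*d^2*e + (-6)*βp*d^2*e^2 + (-3/2)*βp*d^3 + 6*βp*d^3*e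 + (-3)*βm + 6*βm*e + (-3/2)*βm*e^2 + (3/2)*βm*e^3 + 3*βm*d*e + (-21/2)*βm*d*e^2 + (-9/2)*βm*d^2 + (9/2)*βm*d^2*e + 6*βm*d^2*e^2 + (9/2)*βm*d^3 + (-6)*βm*d^3*e) * h2 + (5*βp*e + (-13/2)*βp*e^2 + (9/2)*βp*e^3 + (-1/2)*βp*e^4 + (-1/2)*βp*e^5 + 5*βp*d + (-6)*βp*d*e + (3/2)*βp*d*e^2 + (-2)*βp*d*e^3 + (-3/2)*βp*d*e^4 + (-13/2)*βp*d^2 + (3/2)*βp*d^2*e + 3*βp*d^2*e^2 + 2*βp*d^2*e^3 + 4*βp*d^2*e^4 + (9/2)*βp*d^3 + (-2)*βp*d^3*e + 2*βp*d^3*e^2 + (-8)*βp*d^3*e^3 + (-1/2)*βp*d^4 + (-3/2)*βp*d^4*e + 4*βp*d^4*e^2 + (-1/2)*βp*d^5 + 3*βm + (-5)*βm*e + (19/2)*βm*e^2 + (-11/2)*βm*e^3 + (1/2)*βm*e^4 + (-1/2)*βm*e^5 + (-5)*βm*d + (-6)*βm*d*e + (3/2)*βm*d*e^2 + (-4)*βm*d*e^3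 + (13/2)*βm*d*e^4 + (19/2)*βm*d^2 + (3/2)*βm*d^2*e + 9*βm*d^2*e^2 + (-6)*βm*d^2*e^3 + (-4)*βm*d^2*e^4 + (-11/2)*βm*d^3 + (-4)*βm*d^3*e + (-6)*βm*d^3*e^2 + 8*βm*d^3*e^3 + (1/2)*βm*d^4 + (13/2)*βm*d^4*e + (-4)*βm*d^4*e^2 + (-1/2)*βm*d^5) * h3 + ((-3)*e + 3*e^2 + (-3)*d + 3*d^2) * h4 + ((-3)*βp*e + 3*βp*e^2 + (-6)*βp*e^3 + (-3)*βp*d + 6*βp*d*e^2 + (-3)*βp*d^2 + (-6)*βm + 3*βm*e + (-9)*βm*e^2 + 6*βm*e^3 + 3*βm*d + 12*βm*d*e + (-6)*βm*d*e^2 + (-3)*βm*d^2) * e5 + (6*βp*e + (-3)*βp*e^2 + 3*βp*e^3 + 6*βp*d + (-3)*βp*d*e^2 + (-3)*βp*d^2 + (-3)*βp*d^2*e + 3*βp*d^3 + 6*βm + (-6)*βm*e + 9*βm*e^2 + (-3)*βm*e^3 + (-6)*βm*d + (-12)*βm*d*e + 3*βm*d*e^2 + 9*βm*d^2 + 3*βm*d^2*e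 + (-3)*βm*d^3) * e6 + ((-3)*βp*e + (-3)*βp*e^2 + (-3)*βp*d + 3*βp*d^2 + 6*βp*d^2*e + (-6)*βp*d^3 + (-6)*βm + 3*βm*e + (-3)*βm*e^2 + 3*βm*d + 12*βm*d*e + (-9)*βm*d^2 + (-6)*βm*d^2*e + 6*βm*d^3) * e7 + (3*βp*e^2 + 3*βp*e^3 + (-3)*βp*d*e^2 + 3*βp*d^2 + (-3)*βp*d^2*e + 3*βp*d^3 + 6*βm + 3*βm*e^2 + (-3)*βm*e^3 + (-12)*βm*d*e + 3*βm*d*e^2 + 3*βm*d^2 + 3*βm*d^2*e + (-3)*βm*d^3) * e8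
    · show yp 0 = _
      simp only [Matrix.cons_val_zero, Matrix.cons_val_one, Matrix.head_cons,
        Matrix.cons_val_two, Matrix.tail_cons, Matrix.cons_val_three, Fin.zero_eta, Fin.mk_one,
        Fin.reduceFinMk]
      rw [eq_div_iff hK]
      linear_combination ((1/2)*βp*e^2 + (-3/2)*βp*e^3 + (-6)*βp*d*e + 6*βp*d*e^2 + (-4)*βp*d*e^3 + (-3)*βp*d^2 + (15/2)*βp*d^2*e + (-2)*βp*d^2*e^2 + 3*βp*d^3 + (-3/2)*βm + (-7/2)*βm*e^2 + 2*βm*e^3 + (-3)*βm*d + 9*βm*d*e + (-19/2)*βm*d*e^2 + 4*βm*d*e^3 + 3*βm*d^2 + (-3)*βm*d^2*e + 2*βm*d^2*e^2 + (-9/2)*βm*d^3) * h1 + ((-1/2)*βp*e^2 + (3/2)*βp*e^3 + (-1)*βp*d*e + 3*βp*d*e^2 + 3*βp*d^2 + (-9/2)*βp*d^2*e + 4*βp*d^2*e^2 + (-3)*βp*d^3 + 2*βp*d^3*e + (-3/2)*βm + 1*βm*e + (1/2)*βm*e^2 + (-1)*βm*e^3 + 4*βm*d*e + (-9/2)*βm*d*e^2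 + (-6)*βm*d^2 + 7*βm*d^2*e + (-4)*βm*d^2*e^2 + (3/2)*βm*d^3 + (-2)*βm*d^3*e) * h2 + ((1/6)*βp*e^2 + (-1/2)*βp*e^3 + (1/6)*βp*e^4 + (-1/2)*βp*e^5 + (2/3)*βp*d*e^3 + (-2)*βp*d*e^4 + 1*βp*d^2 + (-1/2)*βp*d^2*e + (-7/2)*βp*d^2*e^2 + 5*βp*d^2*e^3 + (-8/3)*βp*d^2*e^4 + (-1)*βp*d^3 + 4*βp*d^3*e + (-1)*βp*d^3*e^2 + (4/3)*βp*d^3*e^3 + 1*βp*d^4 + (-9/2)*βp*d^4*e + (4/3)*βp*d^4*e^2 + (-1)*βp*d^5 + (-1/2)*βm + (-2/3)*βm*e^2 + (1/3)*βm*e^3 + (-1/6)*βm*e^4 + (1/3)*βm*e^5 + (-2)*βm*d*e + (1/2)*βm*d*e^2 + (-11/3)*βm*d*e^3 + (17/6)*βm*d*e^4 + (-3/2)*βm*d^2 + (-1)*βm*d^2*e + (19/2)*βm*d^2*e^2 + (-23/3)*βm*d^2*e^3 + (8/3)*βm*d^2*e^4 + (3/2)*βm*d^3 + (-7)*βm*d^3*e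 + 5*βm*d^3*e^2 + (-4/3)*βm*d^3*e^3 + (-1)*βm*d^4 + 2*βm*d^4*e + (-4/3)*βm*d^4*e^2 + (3/2)*βm*d^5) * h3 + ((-3/2)*e + (1/2)*e^2 + (-3/2)*d + (-3/2)*d^2) * h4 + (6*βp*e + (-6)*βp*e^2 + 4*βp*e^3 + 6*βp*d + (-9)*βp*d*e + 2*βp*d*e^2 + (-6)*βp*d^2 + 3*βm + (-6)*βm*e + 9*βm*e^2 + (-4)*βm*e^3 + (-6)*βm*d + 3*βm*d*e + (-2)*βm*d*e^2 + 9*βm*d^2) * e5 + ((-2)*βp*e + 4*βp*e^2 + (-2)*βp*e^3 + (-2)*βp*d + 6*βp*d*e + (-1)*βp*d*e^2 + 3*βp*d^2 + 2*βp*d^2*e + 1*βp*d^3 + (-1)*βm + 2*βm*e + (-5)*βm*e^2 + 2*βm*e^3 + 2*βm*d + (-4)*βm*d*e + 1*βm*d*e^2 + (-4)*βm*d^2 + (-2)*βm*d^2*e + (-1)*βm*d^3) * e6 + (1*βp*e + (-3)*βp*e^2 + 1*βp*d + (-3)*βp*d*e + 3*βp*d^2 + (-4)*βp*d^2*e + (-2)*βp*d^3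 + (-1)*βm + (-1)*βm*e + 2*βm*e^2 + (-1)*βm*d + 5*βm*d*e + (-4)*βm*d^2 + 4*βm*d^2*e + 2*βm*d^3) * e7 + ((-1)*βp*e^2 + 3*βp*e^3 + (-6)*βp*d^2 + 3*βp*d^2*e + 6*βp*d^3 + 3*βm + 4*βm*e^2 + (-3)*βm*e^3 + (-6)*βm*d*e + 9*βm*d^2 + (-3)*βm*d^2*e + (-6)*βm*d^3) * e8
    · show yp 1 = _
      simp only [Matrix.cons_val_zero, Matrix.cons_val_one, Matrix.head_cons,
        Matrix.cons_val_two, Matrix.tail_cons, Matrix.cons_val_three, Fin.zero_eta, Fin.mk_one,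
        Fin.reduceFinMk]
      rw [eq_div_iff hK]
      linear_combination (4*βp*e^3 + 1*βp*d*e^2 + (-6)*βp*d*e^3 + (-7)*βp*d^2*e + 6*βp*d^2*e^2 + (-4)*βp*d^3 + 5*βm + 10*βm*e^2 + (-7)*βm*e^3 + (-6)*βm*d + (-10)*βm*d*e + (-4)*βm*d*e^2 + 6*βm*d*e^3 + 16*βm*d^2*e + (-6)*βm*d^2*e^2 + 1*βm*d^3) * h1 + ((-4)*βp*e^3 + (-7)*βp*d*e^2 + 1*βp*d^2*e + 6*βp*d^2*e^2 + 4*βp*d^3 + (-6)*βp*d^3*e + 5*βm + (-6)*βm*e + 1*βm*e^3 + (-10)*βm*d*e + 16*βm*d*e^2 + 10*βm*d^2 + (-4)*βm*d^2*e + (-6)*βm*d^2*e^2 + (-7)*βm*d^3 + 6*βm*d^3*e) * h2 + ((4/3)*βp*e^3 + (4/3)*βp*e^5 + (-1/3)*βp*d*e^2 + 5*βp*d*e^4 + (-1/3)*βp*d^2*e + (-13/3)*βp*d^2*e^3 + (-4)*βp*d^2*e^4 + (4/3)*βp*d^3 + (-13/3)*βp*d^3*e^2 + 8*βp*d^3*e^3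 + 5*βp*d^4*e + (-4)*βp*d^4*e^2 + (4/3)*βp*d^5 + (5/3)*βm + (5/3)*βm*e^2 + (-1/3)*βm*e^3 + (-1/3)*βm*e^5 + (20/3)*βm*d*e + (-8/3)*βm*d*e^2 + 10*βm*d*e^3 + (-10)*βm*d*e^4 + (5/3)*βm*d^2 + (-8/3)*βm*d^2*e + (-20)*βm*d^2*e^2 + (25/3)*βm*d^2*e^3 + 4*βm*d^2*e^4 + (-1/3)*βm*d^3 + 10*βm*d^3*e + (25/3)*βm*d^3*e^2 + (-8)*βm*d^3*e^3 + (-10)*βm*d^4*e + 4*βm*d^4*e^2 + (-1/3)*βm*d^5) * h3 + (5*e + (-3)*e^2 + 5*d + (-3)*d^2) * h4 + ((-2)*βp*e^2 + 6*βp*e^3 + 6*βp*d*e + (-6)*βp*d*e^2 + 8*βp*d^2 + 6*βm + 8*βm*e^2 + (-6)*βm*e^3 + (-18)*βm*d*e + 6*βm*d*e^2 + (-2)*βm*d^2) * e5 + ((-6)*βp*e^2 + 2*βp*e^3 + (-12)*βp*d*e + 4*βp*d*e^2 + (-6)*βp*d^2 + 4*βp*d^2*e + 2*βp*d^3 + (-2)*βm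 + 4*βm*e^2 + (-2)*βm*e^3 + 16*βm*d*e + (-4)*βm*d*e^2 + 4*βm*d^2 + (-4)*βm*d^2*e + (-2)*βm*d^3) * e6 + (8*βp*e^2 + 6*βp*d*e + (-2)*βp*d^2 + (-6)*βp*d^2*e + 6*βp*d^3 + 6*βm + (-2)*βm*e^2 + (-18)*βm*d*e + 8*βm*d^2 + 6*βm*d^2*e + (-6)*βm*d^3) * e7 + ((-8)*βp*e^3 + 2*βp*d*e^2 + 2*βp*d^2*e + (-8)*βp*d^3 + (-10)*βm + (-10)*βm*e^2 + 8*βm*e^3 + 20*βm*d*e + (-2)*βm*d*e^2 + (-10)*βm*d^2 + (-2)*βm*d^2*e + 8*βm*d^3) * e8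
    · show yp 2 = _
      simp only [Matrix.cons_val_zero, Matrix.cons_val_one, Matrix.head_cons,
        Matrix.cons_val_two, Matrix.tail_cons, Matrix.cons_val_three, Fin.zero_eta, Fin.mk_one,
        Fin.reduceFinMk]
      rw [eq_div_iff hK]
      linear_combination (1*βp*e^2 + (-3)*βp*e^3 + 8*βp*d*e + (-12)*βp*d*e^2 + 12*βp*d*e^3 + 4*βp*d^2 + (-3)*βp*d^2*e + (-3)*βm + (-7)*βm*e^2 + 4*βm*e^3 + 10*βm*d + (-2)*βm*d*e + 21*βm*d*e^2 + (-12)*βm*d*e^3 + (-4)*βm*d^2 + (-12)*βm*d^2*e + 5*βm*d^3) * h1 + ((-1)*βp*e^2 + 3*βp*e^3 + (-2)*βp*d*e + 6*βp*d*e^2 + (-4)*βp*d^2 + 9*βp*d^2*e + (-12)*βp*d^2*e^2 + (-3)*βm + 2*βm*e + 1*βm*e^2 + (-2)*βm*e^3 + 8*βm*d*e + (-9)*βm*d*e^2 + (-2)*βm*d^2 + (-12)*βm*d^2*e + 12*βm*d^2*e^2 + 5*βm*d^3) * h2 + ((1/3)*βp*e^2 + (-1)*βp*e^3 + (1/3)*βp*e^4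 + (-1)*βp*e^5 + (4/3)*βp*d*e^3 + (-4)*βp*d*e^4 + (-4/3)*βp*d^2 + 1*βp*d^2*e + 3*βp*d^2*e^2 + (-4)*βp*d^2*e^3 + 8*βp*d^2*e^4 + (-16/3)*βp*d^3*e + 8*βp*d^3*e^2 + (-8)*βp*d^3*e^3 + (-4/3)*βp*d^4 + 1*βp*d^4*e + (-1)*βm + (-4/3)*βm*e^2 + (2/3)*βm*e^3 + (-1/3)*βm*e^4 + (2/3)*βm*e^5 + (-4)*βm*d*e + 1*βm*d*e^2 + (-22/3)*βm*d*e^3 + (17/3)*βm*d*e^4 + (1/3)*βm*d^2 + 4*βm*d^2*e + 9*βm*d^2*e^2 + (20/3)*βm*d^2*e^3 + (-8)*βm*d^2*e^4 + (-5/3)*βm*d^3 + (-2/3)*βm*d^3*e + (-56/3)*βm*d^3*e^2 + 8*βm*d^3*e^3 + (4/3)*βm*d^4 + (22/3)*βm*d^4*e + (-5/3)*βm*d^5) * h3 + ((-3)*e + 1*e^2 + (-3)*d + 5*d^2) * h4 + ((-8)*βp*e + 12*βp*e^2 + (-12)*βp*e^3 + (-8)*βp*d + 6*βp*d*e + (-10)*βm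 + 8*βm*e + (-22)*βm*e^2 + 12*βm*e^3 + 8*βm*d + 14*βm*d*e + (-10)*βm*d^2) * e5 + (6*βp*e + (-4)*βp*e^2 + 6*βp*e^3 + 6*βp*d + (-2)*βp*d^2 + (-6)*βp*d^2*e + 6*βm + (-6)*βm*e + 10*βm*e^2 + (-6)*βm*e^3 + (-6)*βm*d + (-12)*βm*d*e + 8*βm*d^2 + 6*βm*d^2*e) * e6 + (2*βp*e + (-6)*βp*e^2 + 2*βp*d + (-6)*βp*d*e + (-6)*βp*d^2 + 12*βp*d^2*e + (-2)*βm + (-2)*βm*e + 4*βm*e^2 + (-2)*βm*d + 10*βm*d*e + 4*βm*d^2 + (-12)*βm*d^2*e) * e7 + ((-2)*βp*e^2 + 6*βp*e^3 + 8*βp*d^2 + (-6)*βp*d^2*e + 6*βm + 8*βm*e^2 + (-6)*βm*e^3 + (-12)*βm*d*e + (-2)*βm*d^2 + 6*βm*d^2*e) * e8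
    · show yp 3 = _
      simp only [Matrix.cons_val_zero, Matrix.cons_val_one, Matrix.head_cons,
        Matrix.cons_val_two, Matrix.tail_cons, Matrix.cons_val_three, Fin.zero_eta, Fin.mk_one,
        Fin.reduceFinMk]
      rw [eq_div_iff hK]
      linear_combination ((-3/2)*βp*e^2 + (-3/2)*βp*e^3 + 3*βp*d*e + (-3/2)*βp*d*e^2 + 6*βp*d*e^3 + (3/2)*βp*d^2 + (3/2)*βp*d^2*e + (-6)*βp*d^2*e^2 + (3/2)*βp*d^3 + (-3)*βm + (-9/2)*βm*e^2 + (9/2)*βm*e^3 + 6*βm*d + 3*βm*d*e + (9/2)*βm*d*e^2 + (-6)*βm*d*e^3 + (-3/2)*βm*d^2 + (-21/2)*βm*d^2*e + 6*βm*d^2*e^2 + (3/2)*βm*d^3) * h1 + ((3/2)*βp*e^2 + (3/2)*βp*e^3 + 3*βp*d*e + (3/2)*βp*d*e^2 + (-3/2)*βp*d^2 + (-3/2)*βp*d^2*e + (-6)*βp*d^2*e^2 + (-3/2)*βp*d^3 + 6*βp*d^3*e + (-3)*βm + 6*βm*e + (-3/2)*βm*e^2 + (3/2)*βm*e^3 +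 3*βm*d*e + (-21/2)*βm*d*e^2 + (-9/2)*βm*d^2 + (9/2)*βm*d^2*e + 6*βm*d^2*e^2 + (9/2)*βm*d^3 + (-6)*βm*d^3*e) * h2 + ((-1/2)*βp*e^2 + (-1/2)*βp*e^3 + (-1/2)*βp*e^4 + (-1/2)*βp*e^5 + (1/2)*βp*d*e^2 + (-2)*βp*d*e^3 + (-3/2)*βp*d*e^4 + (-1/2)*βp*d^2 + (1/2)*βp*d^2*e + 3*βp*d^2*e^2 + 2*βp*d^2*e^3 + 4*βp*d^2*e^4 + (-1/2)*βp*d^3 + (-2)*βp*d^3*e + 2*βp*d^3*e^2 + (-8)*βp*d^3*e^3 + (-1/2)*βp*d^4 + (-3/2)*βp*d^4*e + 4*βp*d^4*e^2 + (-1/2)*βp*d^5 + (-1)*βm + (-1/2)*βm*e^2 + (-1/2)*βm*e^3 + (1/2)*βm*e^4 + (-1/2)*βm*e^5 + (-4)*βm*d*e + (5/2)*βm*d*e^2 + (-4)*βm*d*e^3 + (13/2)*βm*d*e^4 + (-1/2)*βm*d^2 + (5/2)*βm*d^2*e + 9*βm*d^2*e^2 + (-6)*βm*d^2*e^3 + (-4)*βm*d^2*e^4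 + (-1/2)*βm*d^3 + (-4)*βm*d^3*e + (-6)*βm*d^3*e^2 + 8*βm*d^3*e^3 + (1/2)*βm*d^4 + (13/2)*βm*d^4*e + (-4)*βm*d^4*e^2 + (-1/2)*βm*d^5) * h3 + ((-3)*e + 3*e^2 + (-3)*d + 3*d^2) * h4 + ((-3)*βp*e + 3*βp*e^2 + (-6)*βp*e^3 + (-3)*βp*d + 6*βp*d*e^2 + (-3)*βp*d^2 + (-6)*βm + 3*βm*e + (-9)*βm*e^2 + 6*βm*e^3 + 3*βm*d + 12*βm*d*e + (-6)*βm*d*e^2 + (-3)*βm*d^2) * e5 + (6*βp*e + (-3)*βp*e^2 + 3*βp*e^3 + 6*βp*d + (-3)*βp*d*e^2 + (-3)*βp*d^2 + (-3)*βp*d^2*e + 3*βp*d^3 + 6*βm + (-6)*βm*e + 9*βm*e^2 + (-3)*βm*e^3 + (-6)*βm*d + (-12)*βm*d*e + 3*βm*d*e^2 + 9*βm*d^2 + 3*βm*d^2*e + (-3)*βm*d^3) * e6 + ((-3)*βp*e + (-3)*βp*e^2 + (-3)*βp*d + 3*βp*d^2 + 6*βp*d^2*e + (-6)*βp*d^3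 + (-6)*βm + 3*βm*e + (-3)*βm*e^2 + 3*βm*d + 12*βm*d*e + (-9)*βm*d^2 + (-6)*βm*d^2*e + 6*βm*d^3) * e7 + (3*βp*e^2 + 3*βp*e^3 + (-3)*βp*d*e^2 + 3*βp*d^2 + (-3)*βp*d^2*e + 3*βp*d^3 + 6*βm + 3*βm*e^2 + (-3)*βm*e^3 + (-12)*βm*d*e + 3*βm*d*e^2 + 3*βm*d^2 + 3*βm*d^2*e + (-3)*βm*d^3) * e8

end
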